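/- Let G be an n-vertex graph and k a positive integer such that δ(G) ≥ max{5k−3, n−k}. Then for every two distinct vertices s and t of G, there is a Hamiltonian (s,t)-path in G, i.e., a path from s to t that contains every vertex of G. -/

import Mathlib

private lemma walk_of_chain {V : Type*} (G : SimpleGraph V) :
    ∀ (l : List V) (s t : V), List.Chain G.Adj s l → (s :: l).getLast? = some t →
      ∃ p : G.Walk s t, p.support = s :: l := by
  intro l
  induction l with
  | nil =>
    intro s t _ hlast
    simp only [List.getLast?_singleton, Option.some.injEq] at hlast
    subst hlast
    exact ⟨SimpleGraph.Walk.nil, by simp⟩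
  | cons b l ih =>
    intro s t hchain hlast
    rw [List.Chain, List.isChain_cons_cons] at hchain
    rw [List.getLast?_cons_cons] at hlast
    obtain ⟨q, hq⟩ := ih b t hchain.2 hlast
    exact ⟨SimpleGraph.Walk.cons hchain.1 q, by simp [hq]⟩

/-- the set of vertices other than `u` that are not adjacent to `u` -/
private def badSet {V : Type*} [Fintype V] [DecidableEq V] (G : SimpleGraph V)
    [DecidableRel G.Adj] (u : V) : Finset V :=
  Finset.univ.filter (fun x => x ≠ u ∧ ¬ G.Adj u x)

private lemma badSet_card {V : Type*} [Fintype V] [DecidableEq V] (G : SimpleGraph V)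
    [DecidableRel G.Adj] (u : V) :
    (badSet G u).card + G.degree u + 1 = Fintype.card V := by
  have h1 : badSet G u = Finset.univ \ insert u (G.neighborFinset u) := by
    ext x
    simp only [badSet, Finset.mem_filter, Finset.mem_univ, true_and, Finset.mem_sdiff,
      Finset.mem_insert, SimpleGraph.mem_neighborFinset]
    tauto
  have h2 : u ∉ G.neighborFinset u := by simp
  have h3 : (insert u (G.neighborFinset u)).card = G.degree u + 1 := by
    rw [Finset.card_insert_of_notMem h2, SimpleGraph.degree]
  have h4 : (insert u (G.neighborFinset u)).card ≤ Fintype.card V :=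
    Finset.card_le_card (Finset.subset_univ _) |>.trans (le_of_eq Finset.card_univ)
  rw [h1, Finset.card_sdiff_of_subset (Finset.subset_univ _), Finset.card_univ, h3]
  rw [h3] at h4
  omega

private lemma exists_good_pair {V : Type*} [Fintype V] [DecidableEq V] (G : SimpleGraph V)
    [DecidableRel G.Adj] (k : ℕ) (l : List V) (d v : V)
    (hnd : l.Nodup) (hlen : 2 * k ≤ l.length) (hv : v ∉ l)
    (hcard : (badSet G v).card + 1 ≤ k) :
    ∃ i, i + 1 < l.length ∧ G.Adj v (l.getD i d) ∧ G.Adj v (l.getD (i+1) d) := by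
  by_contra hcon
  push_neg at hcon
  set g : ℕ → V := fun i => if G.Adj v (l.getD i d) then l.getD (i+1) d else l.getD i d with hg
  set B : Finset V := l.toFinset.filter (fun x => ¬ G.Adj v x) with hB
  have hmaps : ∀ i ∈ Finset.range (l.length - 1), g i ∈ B := by
    intro i hi
    rw [Finset.mem_range] at hi
    have hi1 : i + 1 < l.length := by omega
    have hi0 : i < l.length := by omega
    by_cases hadj : G.Adj v (l.getD i d)
    · have := hcon i hi1 hadj
      simp only [hg, if_pos hadj, hB, Finset.mem_filter, List.mem_toFinset]
      exact ⟨by rw [List.getD_eq_getElem l d hi1]; exact List.getElem_mem hi1, this⟩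
    · simp only [hg, if_neg hadj, hB, Finset.mem_filter, List.mem_toFinset]
      exact ⟨by rw [List.getD_eq_getElem l d hi0]; exact List.getElem_mem hi0, hadj⟩
  have hfib : ∀ b ∈ B, ((Finset.range (l.length - 1)).filter fun i => g i = b).card ≤ 2 := by
    intro b hb
    have hbl : b ∈ l := by
      rw [hB, Finset.mem_filter, List.mem_toFinset] at hb; exact hb.1
    obtain ⟨j, hj, hjb⟩ := List.getElem_of_mem hbl
    have hsub : ((Finset.range (l.length - 1)).filter fun i => g i = b) ⊆ {j, j - 1} := by
      intro i hi
      rw [Finset.mem_filter, Finset.mem_range] at hi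
      obtain ⟨hilt, hgi⟩ := hi
      have hi1 : i + 1 < l.length := by omega
      have hi0 : i < l.length := by omega
      simp only [Finset.mem_insert, Finset.mem_singleton]
      by_cases hadj : G.Adj v (l.getD i d)
      · right
        have h5 : l[i+1] = b := by
          rw [← hgi]; simp only [hg, if_pos hadj]
          exact (List.getD_eq_getElem l d hi1).symm
        rw [← hjb, hnd.getElem_inj_iff] at h5
        omega
      · left
        have h5 : l[i] = b := by
          rw [← hgi]; simp only [hg, if_neg hadj]
          exact (List.getD_eq_getElem l d hi0).symm
        rw [← hjb, hnd.getElem_inj_iff] at h5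
        omega
    calc ((Finset.range (l.length - 1)).filter fun i => g i = b).card
        ≤ ({j, j-1} : Finset ℕ).card := Finset.card_le_card hsub
      _ ≤ 2 := (Finset.card_insert_le _ _).trans (by simp)
  have hmain := Finset.card_le_mul_card_image_of_maps_to hmaps 2 hfib
  rw [Finset.card_range] at hmain
  have hBsub : B ⊆ badSet G v := by
    intro x hx
    rw [hB, Finset.mem_filter, List.mem_toFinset] at hx
    rw [badSet, Finset.mem_filter]
    exact ⟨Finset.mem_univ x, fun h => hv (h ▸ hx.1), hx.2⟩
  have := Finset.card_le_card hBsub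
  omega

private lemma insert_vertex {V : Type*} (G : SimpleGraph V) (l₁ l₂ : List V) (a b v : V)
    (hnd : (l₁ ++ a :: b :: l₂).Nodup) (hch : (l₁ ++ a :: b :: l₂).Chain' G.Adj)
    (hva : G.Adj v a) (hvb : G.Adj v b) (hv : v ∉ l₁ ++ a :: b :: l₂) :
    let l' := l₁ ++ a :: v :: b :: l₂
    l'.Nodup ∧ l'.Chain' G.Adj ∧ l'.head? = (l₁ ++ a :: b :: l₂).head? ∧
      l'.getLast? = (l₁ ++ a :: b :: l₂).getLast? ∧
      l'.length = (l₁ ++ a :: b :: l₂).length + 1 ∧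
      (∀ x, x ∈ l' ↔ x = v ∨ x ∈ l₁ ++ a :: b :: l₂) := by
  intro l'
  have hperm : l'.Perm (v :: (l₁ ++ a :: b :: l₂)) := by
    have : l' = (l₁ ++ [a]) ++ v :: (b :: l₂) := by simp [l']
    rw [this]
    refine (List.perm_middle).trans ?_
    refine List.Perm.cons v ?_
    simp
  refine ⟨?_, ?_, ?_, ?_, ?_, ?_⟩
  · rw [hperm.nodup_iff, List.nodup_cons]
    exact ⟨hv, hnd⟩
  · rw [List.Chain', List.isChain_split] at hch ⊢
    refine ⟨hch.1, ?_⟩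
    rw [List.isChain_cons_cons, List.isChain_cons_cons]
    rw [List.isChain_cons_cons] at hch
    exact ⟨hva.symm, hvb, hch.2.2⟩
  · cases l₁ <;> simp [l']
  · rw [List.getLast?_append_of_ne_nil l₁ (by simp), List.getLast?_append_of_ne_nil l₁ (by simp)]
    simp [List.getLast?_cons_cons]
  · simp only [l', List.length_append, List.length_cons]; omega
  · intro x
    rw [hperm.mem_iff, List.mem_cons]

private lemma list_decomp {α : Type*} (l : List α) (i : ℕ) (h : i + 1 < l.length) :
    l = l.take i ++ l[i] :: l[i+1] :: l.drop (i+2) := by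
  conv_lhs => rw [← List.take_append_drop i l]
  rw [List.drop_eq_getElem_cons (by omega : i < l.length),
    List.drop_eq_getElem_cons (by omega : i + 1 < l.length)]

private lemma saturate {V : Type*} [Fintype V] [DecidableEq V] (G : SimpleGraph V)
    [DecidableRel G.Adj] (k : ℕ) (hbad : ∀ v : V, (badSet G v).card + 1 ≤ k) :
    ∀ (m : ℕ) (l : List V), l.Nodup → l.Chain' G.Adj → 2 * k ≤ l.length →
      Fintype.card V ≤ l.length + m →
      ∃ l' : List V, l'.Nodup ∧ l'.Chain' G.Adj ∧ l'.head? = l.head? ∧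
        l'.getLast? = l.getLast? ∧ ∀ v : V, v ∈ l' := by
  intro m
  induction m with
  | zero =>
    intro l hnd hch hlen hcount
    refine ⟨l, hnd, hch, rfl, rfl, ?_⟩
    intro v
    have h1 : l.toFinset = Finset.univ := by
      apply Finset.eq_univ_of_card
      rw [List.toFinset_card_of_nodup hnd]
      have := hnd.length_le_card
      omega
    rw [← List.mem_toFinset, h1]
    exact Finset.mem_univ v
  | succ m ih =>
    intro l hnd hch hlen hcount
    by_cases hall : ∀ v : V, v ∈ l
    · exact ⟨l, hnd, hch, rfl, rfl, hall⟩
    · push_neg at hall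
      obtain ⟨v, hv⟩ := hall
      obtain ⟨i, hi, hva, hvb⟩ := exists_good_pair G k l v v hnd hlen hv (hbad v)
      rw [List.getD_eq_getElem l v (by omega : i < l.length)] at hva
      rw [List.getD_eq_getElem l v hi] at hvb
      have hdec := list_decomp l i hi
      rw [hdec] at hnd hch hv
      obtain ⟨h1, h2, h3, h4, h5, h6⟩ :=
        insert_vertex G (l.take i) (l.drop (i+2)) l[i] l[i+1] v hnd hch hva hvb hv
      set l'' := l.take i ++ l[i] :: v :: l[i+1] :: l.drop (i+2) with hl''
      have hlen'' : l''.length = l.length + 1 := by rw [h5, ← hdec]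
      obtain ⟨l', p1, p2, p3, p4, p5⟩ := ih l'' h1 h2 (by omega) (by omega)
      refine ⟨l', p1, p2, ?_, ?_, p5⟩
      · rw [p3, h3, ← hdec]
      · rw [p4, h4, ← hdec]

private lemma grow {V : Type*} [Fintype V] [DecidableEq V] (G : SimpleGraph V)
    [DecidableRel G.Adj] (k : ℕ) (s t : V) (hst : s ≠ t) (hk : 1 ≤ k)
    (hdeg : ∀ v, Fintype.card V ≤ G.degree v + k)
    (hn : 5 * k ≤ Fintype.card V + 2) :
    ∀ j, j + 1 ≤ 2 * k - 1 → ∃ l : List V, l.Nodup ∧ l.Chain' G.Adj ∧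
      l.head? = some s ∧ t ∉ l ∧ l.length = j + 1 := by
  intro j
  induction j with
  | zero =>
    intro _
    exact ⟨[s], by simp, by simp [List.Chain'], by simp, by simp only [List.mem_singleton]; exact fun h => hst h.symm, by simp⟩
  | succ j ih =>
    intro hj
    obtain ⟨l, hnd, hch, hhead, htl, hlen⟩ := ih (by omega)
    have hlne : l ≠ [] := by
      intro h; rw [h] at hlen; simp at hlen
    set u := l.getLast hlne with hu
    have hw : ∃ w, G.Adj u w ∧ w ∉ l ∧ w ≠ t := by
      by_contra hcon
      push_neg at hcon
      have hsub : G.neighborFinset u ⊆ l.toFinset ∪ {t} := by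
        intro x hx
        rw [SimpleGraph.mem_neighborFinset] at hx
        rw [Finset.mem_union, List.mem_toFinset, Finset.mem_singleton]
        rcases Classical.em (x ∈ l) with h | h
        · exact Or.inl h
        · exact Or.inr (hcon x hx h)
      have h1 := Finset.card_le_card hsub
      have h3 : (l.toFinset).card = l.length := List.toFinset_card_of_nodup hnd
      have h4 : G.degree u = (G.neighborFinset u).card := rfl
      have h5 := hdeg u
      have h6 := G.degree_lt_card_verts u
      have h7 : ({t} : Finset V).card = 1 := Finset.card_singleton t
      have := h1.trans (Finset.card_union_le _ _)
      omega
    obtain ⟨w, hadj, hwl, hwt⟩ := hw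
    refine ⟨l ++ [w], ?_, ?_, ?_, ?_, ?_⟩
    · rw [List.nodup_append]
      exact ⟨hnd, by simp, by simp; rintro a ha rfl; exact hwl ha⟩
    · rw [List.Chain', List.isChain_append]
      refine ⟨hch, by simp, ?_⟩
      intro x hx y hy
      rw [List.getLast?_eq_getLast hlne, Option.mem_some_iff] at hx
      simp only [List.head?_cons, Option.mem_some_iff] at hy
      rw [← hx, ← hy] at *
      exact hadj
    · cases l with
      | nil => exact absurd rfl hlne
      | cons a r => simpa using hhead
    · simp only [List.mem_append, List.mem_singleton]
      rintro (h | h)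
      · exact htl h
      · exact hwt h.symm
    · simp [hlen]

/-- Let `G` be an `n`-vertex graph and `k ≥ 1` with `δ(G) ≥ max {5k - 3, n - k}`.
Then for every two distinct vertices `s` and `t` there is a Hamiltonian
`(s,t)`-path in `G`. -/
theorem hamiltonian_path_of_minDegree {V : Type*} [Fintype V] (G : SimpleGraph V)
    [DecidableRel G.Adj] (k : ℕ) (hk : 1 ≤ k)
    (hδ : max (5 * k - 3) (Fintype.card V - k) ≤ G.minDegree) :
    ∀ s t : V, s ≠ t → ∃ p : G.Walk s t, p.IsPath ∧ ∀ v : V, v ∈ p.support := by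
  intro s t hst
  classical
  have hdeg : ∀ v : V, Fintype.card V ≤ G.degree v + k ∧ 5 * k ≤ G.degree v + 3 := by
    intro v
    have h1 : (5 * k - 3 : ℕ) ≤ G.degree v :=
      ((le_max_left _ _).trans hδ).trans (G.minDegree_le_degree v)
    have h2 : (Fintype.card V - k : ℕ) ≤ G.degree v :=
      ((le_max_right _ _).trans hδ).trans (G.minDegree_le_degree v)
    have h3 := G.degree_lt_card_verts v
    omega
  have hdeg1 : ∀ v : V, Fintype.card V ≤ G.degree v + k := fun v => (hdeg v).1
  have hn2 : 5 * k ≤ Fintype.card V + 2 := by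
    have h3 := G.degree_lt_card_verts s
    have := (hdeg s).2
    omega
  have hbad : ∀ v : V, (badSet G v).card + 1 ≤ k := by
    intro v
    have h1 := badSet_card G v
    have h2 := (hdeg v).1
    omega
  -- Step 1: grow a path from s of 2k-1 vertices, avoiding t
  obtain ⟨l, hnd, hch, hhead, htl, hlen⟩ :=
    grow G k s t hst hk hdeg1 hn2 (2 * k - 2) (by omega)
  have hlen' : l.length = 2 * k - 1 := by omega
  have hlne : l ≠ [] := by
    intro h; rw [h] at hlen; simp at hlen
  set u := l.getLast hlne with hu
  have hul : u ∈ l := List.getLast_mem hlne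
  -- Step 2: connect u to t through a common neighbor w
  have hw : ∃ w, w ∉ l ∧ w ≠ t ∧ G.Adj u w ∧ G.Adj w t := by
    by_contra hcon
    push_neg at hcon
    have hsub : Finset.univ \ (l.toFinset ∪ {t}) ⊆ badSet G u ∪ badSet G t := by
      intro x hx
      rw [Finset.mem_sdiff, Finset.mem_union, List.mem_toFinset, Finset.mem_singleton] at hx
      have hxl : x ∉ l := fun h => hx.2 (Or.inl h)
      have hxt : x ≠ t := fun h => hx.2 (Or.inr h)
      have hxu : x ≠ u := fun h => hxl (h ▸ hul)
      have := hcon x hxl hxt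
      rw [Finset.mem_union]
      rcases Classical.em (G.Adj u x) with h | h
      · refine Or.inr ?_
        rw [badSet, Finset.mem_filter]
        refine ⟨Finset.mem_univ x, hxt, fun ha => this h ha.symm⟩
      · refine Or.inl ?_
        rw [badSet, Finset.mem_filter]
        exact ⟨Finset.mem_univ x, hxu, h⟩
    have h1 := Finset.card_le_card hsub
    have h2 := (Finset.card_union_le (badSet G u) (badSet G t))
    have h3 : (l.toFinset ∪ {t} : Finset V).card = l.length + 1 := by
      rw [Finset.card_union_of_disjoint (by simp [Finset.disjoint_right, htl]),
        List.toFinset_card_of_nodup hnd, Finset.card_singleton]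
    have h4 : (Finset.univ \ (l.toFinset ∪ {t}) : Finset V).card
        = Fintype.card V - (l.toFinset ∪ {t}).card := by
      rw [Finset.card_sdiff_of_subset (Finset.subset_univ _), Finset.card_univ]
    have h5 : (l.toFinset ∪ {t} : Finset V).card ≤ Fintype.card V := by
      exact (Finset.card_le_card (Finset.subset_univ _)).trans_eq Finset.card_univ
    have hbu := hbad u
    have hbt := hbad t
    omega
  obtain ⟨w, hwl, hwt, huw, hwtadj⟩ := hw
  -- the base path from s to t
  set l₀ : List V := l ++ [w, t] with hl₀
  have hl₀nd : l₀.Nodup := by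
    rw [hl₀, List.nodup_append]
    refine ⟨hnd, by simp [hwt], ?_⟩
    simp only [List.disjoint_right, List.mem_cons, List.not_mem_nil, or_false]
    rintro a ha b (rfl | rfl) rfl
    · exact hwl ha
    · exact htl ha
  have hl₀ch : l₀.Chain' G.Adj := by
    rw [hl₀, List.Chain', List.isChain_append]
    refine ⟨hch, by simp [hwtadj], ?_⟩
    intro x hx y hy
    rw [List.getLast?_eq_getLast hlne, Option.mem_some_iff] at hx
    simp only [List.head?_cons, Option.mem_some_iff] at hy
    rw [← hx, ← hy]
    exact huw
  have hl₀head : l₀.head? = some s := by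
    rw [hl₀]
    cases l with
    | nil => exact absurd rfl hlne
    | cons a r => simpa using hhead
  have hl₀last : l₀.getLast? = some t := by
    rw [hl₀, List.getLast?_append_of_ne_nil l (by simp)]
    simp
  have hl₀len : 2 * k ≤ l₀.length := by
    rw [hl₀]; simp only [List.length_append, List.length_cons, List.length_nil]
    omega
  -- Step 3: saturate
  obtain ⟨l', p1, p2, p3, p4, p5⟩ :=
    saturate G k hbad (Fintype.card V) l₀ hl₀nd hl₀ch hl₀len (by omega)
  rw [hl₀head] at p3
  rw [hl₀last] at p4
  -- Step 4: convert to a walk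
  cases l' with
  | nil => simp at p3
  | cons a r =>
    simp only [List.head?_cons, Option.some.injEq] at p3
    subst p3
    obtain ⟨p, hp⟩ := walk_of_chain G r _ t p2 p4
    refine ⟨p, ?_, ?_⟩
    · rw [SimpleGraph.Walk.isPath_def, hp]
      exact p1
    · intro v
      rw [hp]
      exact p5 v
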